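/- arXiv:1206.5120 — 2 statements merged into one kernel-verified Lean document; each statement's English description precedes it below -/
import Mathlib

section
/- If the supply graph G is a cycle, H is simple, and (G, H) has the uniqueness property, then |L| ≤ 4. -/
open scoped Classical
open MeasureTheory

/-- The positive (counterclockwise) route of the OD-pair `(o, d)` on the cycle with
vertex set `ZMod n` contains the positive arc at edge `v` (the arc from `v` to `v + 1`)
iff `posRoute n o d v` holds. -/
def posRoute (n : ℕ) (o d v : ZMod n) : Prop := (v - o).val < (d - o).val

/-- The negative (clockwise) route of `(o, d)` contains the negative arc at edge `v`
(the arc from `v + 1` to `v`) iff `negRoute n o d v` holds. -/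
def negRoute (n : ℕ) (o d v : ZMod n) : Prop := (v - d).val < (o - d).val

/-- An arc of the directed version of the cycle is a pair `(v, b)`: for `b = true` the
positive arc `v → v + 1`, for `b = false` the negative arc `v + 1 → v`.
`inRoute n o d b a` says that arc `a` lies on the route of direction `b` of the
OD-pair `(o, d)`. -/
def inRoute (n : ℕ) (o d : ZMod n) (b : Bool) (a : ZMod n × Bool) : Prop :=
  a.2 = b ∧ (if b then posRoute n o d a.1 else negRoute n o d a.1)

/-- Flow induced on arc `a` by the strategy profile `σ` (`σ i = true` means that
user `i` chooses their positive route, `σ i = false` their negative route). -/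
noncomputable def flow {I : Type} [MeasurableSpace I] (μ : Measure I) (n : ℕ)
    (od : I → ZMod n × ZMod n) (σ : I → Bool) (a : ZMod n × Bool) : ℝ :=
  (μ {i | inRoute n (od i).1 (od i).2 (σ i) a}).toReal

/-- The cost, for user `i`, of their route in direction `b`, given arc flows `f`:
the sum over the arcs of that route of the user-specific arc costs. -/
noncomputable def routeCost {I : Type} (n : ℕ) [NeZero n]
    (c : I → ZMod n × Bool → ℝ → ℝ) (f : ZMod n × Bool → ℝ)
    (od : I → ZMod n × ZMod n) (i : I) (b : Bool) : ℝ :=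
  ∑ a ∈ Finset.univ.filter (fun a : ZMod n × Bool => inRoute n (od i).1 (od i).2 b a),
    c i a (f a)

/-- `σ` is a Nash equilibrium: every user's chosen route is a minimal-cost route
given the induced flows. -/
def IsEquilibrium {I : Type} [MeasurableSpace I] (μ : Measure I) (n : ℕ) [NeZero n]
    (od : I → ZMod n × ZMod n) (c : I → ZMod n × Bool → ℝ → ℝ) (σ : I → Bool) : Prop :=
  ∀ (i : I) (b : Bool),
    routeCost n c (flow μ n od σ) od i (σ i) ≤ routeCost n c (flow μ n od σ) od i b

/-- The pair `(G, H)` (cycle on `ZMod n`, demand digraph with arc set `L`) has the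
uniqueness property: for every nonatomic population partitioned according to its
OD-pairs and every assignment of strictly increasing continuous nonnegative
user-specific cost functions, all Nash equilibria induce the same arc flows. -/
def UniquenessProperty (n : ℕ) [NeZero n] (L : Finset (ZMod n × ZMod n)) : Prop :=
  ∀ (I : Type) (m : MeasurableSpace I) (μ : @Measure I m),
    @IsFiniteMeasure I m μ →
    ∀ od : I → ZMod n × ZMod n, (∀ i, od i ∈ L) →
    ∀ c : I → ZMod n × Bool → ℝ → ℝ,
      (∀ i a, StrictMono (c i a)) → (∀ i a, Continuous (c i a)) →
      (∀ i a x, 0 ≤ c i a x) →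
    ∀ σ σ' : I → Bool,
      (∀ a, @MeasurableSet I m {i | inRoute n (od i).1 (od i).2 (σ i) a}) →
      (∀ a, @MeasurableSet I m {i | inRoute n (od i).1 (od i).2 (σ' i) a}) →
      @IsEquilibrium I m μ n _ od c σ → @IsEquilibrium I m μ n _ od c σ' →
      ∀ a : ZMod n × Bool, @flow I m μ n od σ a = @flow I m μ n od σ' a


set_option linter.unusedSectionVars false
set_option maxHeartbeats 1000000

section auxLemmas
variable {n : ℕ} [NeZero n]

lemma val_ne_zero' {k : ZMod n} (hk : k ≠ 0) : k.val ≠ 0 := by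
  intro h
  apply hk
  have := ZMod.natCast_rightInverse (n := n) k
  rw [← this, h]; simp

lemma val_inj' {a b : ZMod n} (h : a.val = b.val) : a = b := by
  have ha := ZMod.natCast_rightInverse (n := n) a
  have hb := ZMod.natCast_rightInverse (n := n) b
  rw [← ha, ← hb, h]

lemma neg_iff_not_pos {o d : ZMod n} (h : o ≠ d) (v : ZMod n) :
    negRoute n o d v ↔ ¬ posRoute n o d v := by
  unfold posRoute negRoute
  have hk : d - o ≠ 0 := sub_ne_zero_of_ne (Ne.symm h)
  have h1 : v - d = (v - o) + (-(d - o)) := by ring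
  have h2 : o - d = -(d - o) := by ring
  rw [h1, h2, ZMod.val_add, @ZMod.val_neg_of_ne_zero n _ _ ⟨hk⟩]
  have hx : (v - o).val < n := ZMod.val_lt _
  have hkl : (d - o).val < n := ZMod.val_lt _
  have hk0 : (d - o).val ≠ 0 := val_ne_zero' hk
  set x := (v - o).val
  set k := (d - o).val
  rcases lt_or_ge x k with hlt | hge
  · rw [Nat.mod_eq_of_lt (by omega)]
    omega
  · have : x + (n - k) = (x - k) + n := by omega
    rw [this, Nat.add_mod_right, Nat.mod_eq_of_lt (by omega)]
    omega

lemma pos_self {o d : ZMod n} (h : o ≠ d) : posRoute n o d o := by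
  unfold posRoute
  simpa using Nat.pos_of_ne_zero (val_ne_zero' (sub_ne_zero_of_ne (Ne.symm h)))

lemma neg_self {o d : ZMod n} (h : o ≠ d) : negRoute n o d d := by
  unfold negRoute
  simpa using Nat.pos_of_ne_zero (val_ne_zero' (sub_ne_zero_of_ne h))

lemma not_pos_pred (hn : 3 ≤ n) (o d : ZMod n) : ¬ posRoute n o d (o - 1) := by
  unfold posRoute
  have h1 : ((o - 1) - o : ZMod n) = -1 := by ring
  have hne : (1 : ZMod n) ≠ 0 := by
    intro h
    have h1lt : (1 : ZMod n).val = 1 := @ZMod.val_one n ⟨by omega⟩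
    rw [h] at h1lt; simp at h1lt
  have h2 : ((-1 : ZMod n)).val = n - 1 := by
    rw [@ZMod.val_neg_of_ne_zero n _ 1 ⟨hne⟩, @ZMod.val_one n ⟨by omega⟩]
  rw [h1, h2]
  have := ZMod.val_lt (d - o)
  omega

lemma pin_origin (hn : 3 ≤ n) {o o' d' : ZMod n} (h1 : posRoute n o' d' o)
    (h2 : ¬ posRoute n o' d' (o - 1)) : o = o' := by
  unfold posRoute at h1 h2
  have e1 : (o - 1) - o' = (o - o') + (-1) := by ring
  have hne : (1 : ZMod n) ≠ 0 := by
    intro h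
    have h1lt : (1 : ZMod n).val = 1 := @ZMod.val_one n ⟨by omega⟩
    rw [h] at h1lt; simp at h1lt
  have hneg1 : ((-1 : ZMod n)).val = n - 1 := by
    rw [@ZMod.val_neg_of_ne_zero n _ 1 ⟨hne⟩, @ZMod.val_one n ⟨by omega⟩]
  rw [e1, ZMod.val_add, hneg1] at h2
  set t := (o - o').val with ht
  have htlt : t < n := ZMod.val_lt _
  rcases Nat.eq_zero_or_pos t with h0 | hp
  · have : o - o' = 0 := val_inj' (by rw [← ht, h0]; simp)
    exact sub_eq_zero.mp this
  · exfalso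
    have e2 : t + (n - 1) = (t - 1) + n := by omega
    rw [e2, Nat.add_mod_right, Nat.mod_eq_of_lt (by omega)] at h2
    omega

lemma exists_route_ne (hn : 3 ≤ n) {p q : ZMod n × ZMod n} (hp : p.1 ≠ p.2)
    (hq : q.1 ≠ q.2) (hpq : p ≠ q) :
    ∃ v, ¬ (posRoute n p.1 p.2 v ↔ posRoute n q.1 q.2 v) := by
  obtain ⟨o1, d1⟩ := p
  obtain ⟨o2, d2⟩ := q
  by_contra hcon
  push_neg at hcon
  have H := hcon
  have ho : o1 = o2 := by
    apply pin_origin hn ((H o1).mp (pos_self hp))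
    intro hc
    exact not_pos_pred hn o1 d1 ((H _).mpr hc)
  subst ho
  apply hpq
  have hk : (d1 - o1).val = (d2 - o1).val := by
    by_contra hne
    rcases Nat.lt_or_ge (d1 - o1).val (d2 - o1).val with hlt | hge
    · have : posRoute n o1 d2 d1 := hlt
      have := (H d1).mpr this
      unfold posRoute at this; simp at this
    · rcases Nat.lt_or_ge (d2 - o1).val (d1 - o1).val with hlt2 | hge2
      · have : posRoute n o1 d1 d2 := hlt2
        have := (H d2).mp this
        unfold posRoute at this; simp at this
      · omega
  have : d1 - o1 = d2 - o1 := val_inj' hk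
  rw [sub_left_injective this]

/-- membership of arc `(v,s)` in the route of direction `s`. -/
def chi (n : ℕ) (s : Bool) (p : ZMod n × ZMod n) (v : ZMod n) : Prop :=
  if s then posRoute n p.1 p.2 v else negRoute n p.1 p.2 v

lemma inRoute_same (s : Bool) (p : ZMod n × ZMod n) (v : ZMod n) :
    inRoute n p.1 p.2 s (v, s) ↔ chi n s p v := by
  simp [inRoute, chi]

lemma inRoute_opp (s : Bool) {p : ZMod n × ZMod n} (hp : p.1 ≠ p.2) (v : ZMod n) :
    inRoute n p.1 p.2 (!s) (v, !s) ↔ ¬ chi n s p v := by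
  cases s
  · simp only [inRoute, chi, Bool.not_false, if_true, if_false]
    have := neg_iff_not_pos (n := n) (o := p.1) (d := p.2) hp v
    simp only [true_and]
    tauto
  · simp only [inRoute, chi, Bool.not_true, if_true, if_false]
    have := neg_iff_not_pos (n := n) (o := p.1) (d := p.2) hp v
    simp only [true_and]
    tauto

lemma inRoute_mismatch {o d : ZMod n} {b b' : Bool} (h : b' ≠ b) (v : ZMod n) :
    ¬ inRoute n o d b (v, b') := fun hh => h hh.1

lemma exists_chi_ne (hn : 3 ≤ n) (s : Bool) {p q : ZMod n × ZMod n} (hp : p.1 ≠ p.2)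
    (hq : q.1 ≠ q.2) (hpq : p ≠ q) :
    ∃ v, ¬ (chi n s p v ↔ chi n s q v) := by
  obtain ⟨v, hv⟩ := exists_route_ne hn hp hq hpq
  refine ⟨v, ?_⟩
  have h1 := neg_iff_not_pos (n := n) (o := p.1) (d := p.2) hp v
  have h2 := neg_iff_not_pos (n := n) (o := q.1) (d := q.2) hq v
  cases s <;> simp only [chi, if_true, if_false] <;> tauto

/-- the set of arcs of the route of direction `b`. -/
noncomputable def Rset (n : ℕ) [NeZero n] (o d : ZMod n) (b : Bool) : Finset (ZMod n × Bool) :=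
  Finset.univ.filter (fun a : ZMod n × Bool => inRoute n o d b a)

lemma Rset_nonempty {o d : ZMod n} (h : o ≠ d) (b : Bool) : (Rset n o d b).Nonempty := by
  cases b
  · exact ⟨(d, false), Finset.mem_filter.mpr ⟨Finset.mem_univ _, rfl, by simpa using neg_self h⟩⟩
  · exact ⟨(o, true), Finset.mem_filter.mpr ⟨Finset.mem_univ _, rfl, by simpa using pos_self h⟩⟩

/-- the cost functions used in the construction. -/
noncomputable def wcost (n : ℕ) (g : ZMod n × Bool) (K δ : ℝ) (a : ZMod n × Bool) (x : ℝ) : ℝ :=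
  if a = g then Real.exp x else (if a.2 = g.2 then 0 else K) + δ * Real.exp x

lemma wcost_strictMono (g : ZMod n × Bool) {K δ : ℝ} (hδ : 0 < δ) (a : ZMod n × Bool) :
    StrictMono (wcost n g K δ a) := by
  intro x y hxy
  unfold wcost
  split
  · exact Real.exp_lt_exp.2 hxy
  · exact (add_lt_add_iff_left _).2 (mul_lt_mul_of_pos_left (Real.exp_lt_exp.2 hxy) hδ)

lemma wcost_continuous (g : ZMod n × Bool) (K δ : ℝ) (a : ZMod n × Bool) :
    Continuous (wcost n g K δ a) := by
  unfold wcost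
  split
  · exact Real.continuous_exp
  · exact continuous_const.add (continuous_const.mul Real.continuous_exp)

lemma wcost_nonneg (g : ZMod n × Bool) {K δ : ℝ} (hK : 0 ≤ K) (hδ : 0 ≤ δ)
    (a : ZMod n × Bool) (x : ℝ) : 0 ≤ wcost n g K δ a x := by
  unfold wcost
  split
  · exact (Real.exp_pos x).le
  · have : (0:ℝ) ≤ if a.2 = g.2 then 0 else K := by split <;> simp [hK]
    positivity

lemma sum_bound (f : ZMod n × Bool → ℝ) (hf7 : ∀ a, f a ≤ 7) (S : Finset (ZMod n × Bool)) :
    (1/(4*n*Real.exp 7)) * ∑ a ∈ S, Real.exp (f a) ≤ 1/2 := by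
  have hcard : (S.card : ℝ) ≤ 2 * n := by
    have h1 : S.card ≤ Fintype.card (ZMod n × Bool) := Finset.card_le_univ S
    have h2 : Fintype.card (ZMod n × Bool) = n * 2 := by
      rw [Fintype.card_prod, ZMod.card, Fintype.card_bool]
    rw [h2] at h1
    exact_mod_cast le_of_le_of_eq (Nat.cast_le.mpr h1) (by push_cast; ring)
  have hsum : ∑ a ∈ S, Real.exp (f a) ≤ S.card * Real.exp 7 := by
    have := Finset.sum_le_card_nsmul S (fun a => Real.exp (f a)) (Real.exp 7)
      (fun a _ => Real.exp_le_exp.2 (hf7 a))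
    simpa [nsmul_eq_mul] using this
  have hn0 : (0:ℝ) < n := by
    have := Nat.pos_of_ne_zero (NeZero.ne n)
    exact_mod_cast this
  have hexp : (0:ℝ) < Real.exp 7 := Real.exp_pos _
  have h3 : ∑ a ∈ S, Real.exp (f a) ≤ 2 * n * Real.exp 7 :=
    le_trans hsum (by nlinarith)
  rw [div_mul_eq_mul_div, one_mul, div_le_div_iff₀ (by positivity) (by norm_num)]
  nlinarith [Finset.sum_nonneg (fun a (_ : a ∈ S) => (Real.exp_pos (f a)).le)]

lemma exp_succ_ineq {u : ℝ} (hu : 0 ≤ u) : Real.exp u + 1 ≤ Real.exp (u + 1) := by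
  rw [Real.exp_add]
  have h1 : (2:ℝ) ≤ Real.exp 1 := by
    have := Real.add_one_le_exp (1:ℝ)
    linarith
  have h2 : (1:ℝ) ≤ Real.exp u := Real.one_le_exp hu
  nlinarith

lemma key_sums {o d : ZMod n} (ho : o ≠ d) (g : ZMod n × Bool)
    (hg : inRoute n o d g.2 g) (f : ZMod n × Bool → ℝ)
    (hf7 : ∀ a, f a ≤ 7) (u : ℝ) (hu : 0 ≤ u) (K δ : ℝ)
    (hKdef : K = (Real.exp u + Real.exp (u+1))/(2*((Rset n o d (!g.2)).card : ℝ)))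
    (hδdef : δ = 1/(4*n*Real.exp 7)) :
    (f g = u → ∑ a ∈ Rset n o d g.2, wcost n g K δ a (f a)
      ≤ ∑ a ∈ Rset n o d (!g.2), wcost n g K δ a (f a)) ∧
    (f g = u + 1 → ∑ a ∈ Rset n o d (!g.2), wcost n g K δ a (f a)
      ≤ ∑ a ∈ Rset n o d g.2, wcost n g K δ a (f a)) := by
  subst hKdef hδdef
  set m := (Rset n o d (!g.2)).card with hm
  set K := (Real.exp u + Real.exp (u+1))/(2*(m : ℝ)) with hK
  set δ := 1/(4*(n:ℝ)*Real.exp 7) with hδ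
  have hδpos : 0 < δ := by
    have hn0 : (0:ℝ) < n := by exact_mod_cast Nat.pos_of_ne_zero (NeZero.ne n)
    have := Real.exp_pos (7:ℝ)
    rw [hδ]; positivity
  have hm1 : 1 ≤ m := Finset.card_pos.mpr (Rset_nonempty ho (!g.2))
  have hmne : (m:ℝ) ≠ 0 := by
    have : (0:ℝ) < m := by exact_mod_cast hm1
    linarith
  have hmK : (m:ℝ) * K = (Real.exp u + Real.exp (u+1))/2 := by
    rw [hK]
    field_simp
  have hgmem : g ∈ Rset n o d g.2 := Finset.mem_filter.mpr ⟨Finset.mem_univ _, hg⟩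
  have hLHS : ∀ (fv : ZMod n × Bool → ℝ),
      ∑ a ∈ Rset n o d g.2, wcost n g K δ a (fv a)
      = Real.exp (fv g) + δ * ∑ a ∈ (Rset n o d g.2).erase g, Real.exp (fv a) := by
    intro fv
    rw [← Finset.add_sum_erase _ _ hgmem]
    congr 1
    · simp [wcost]
    · rw [Finset.mul_sum]
      apply Finset.sum_congr rfl
      intro a ha
      have hane : a ≠ g := (Finset.mem_erase.mp ha).1
      have ha2 : a.2 = g.2 := by
        have := (Finset.mem_filter.mp (Finset.mem_erase.mp ha).2).2
        exact this.1
      simp [wcost, hane, ha2]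
  have hRHS : ∀ (fv : ZMod n × Bool → ℝ),
      ∑ a ∈ Rset n o d (!g.2), wcost n g K δ a (fv a)
      = (m:ℝ) * K + δ * ∑ a ∈ Rset n o d (!g.2), Real.exp (fv a) := by
    intro fv
    have : ∀ a ∈ Rset n o d (!g.2), wcost n g K δ a (fv a) = K + δ * Real.exp (fv a) := by
      intro a ha
      have ha2 : a.2 = !g.2 := (Finset.mem_filter.mp ha).2.1
      have hane : a ≠ g := by
        intro h; rw [h] at ha2; exact Bool.not_ne_self g.2 ha2.symm
      have ha2' : ¬ (a.2 = g.2) := by rw [ha2]; exact Bool.not_ne_self g.2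
      simp [wcost, hane, ha2']
    rw [Finset.sum_congr rfl this, Finset.sum_add_distrib, Finset.sum_const,
      nsmul_eq_mul, Finset.mul_sum]
  have hbound1 : ∀ S : Finset (ZMod n × Bool), δ * ∑ a ∈ S, Real.exp (f a) ≤ 1/2 :=
    fun S => sum_bound f hf7 S
  have hnonneg : ∀ S : Finset (ZMod n × Bool), 0 ≤ δ * ∑ a ∈ S, Real.exp (f a) := by
    intro S
    have := Finset.sum_nonneg (fun a (_ : a ∈ S) => (Real.exp_pos (f a)).le)
    positivity
  have hkey : Real.exp u + 1 ≤ Real.exp (u + 1) := exp_succ_ineq hu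
  constructor
  · intro hfg
    rw [hLHS f, hRHS f, hfg, hmK]
    have h1 := hbound1 ((Rset n o d g.2).erase g)
    have h2 := hnonneg (Rset n o d (!g.2))
    linarith
  · intro hfg
    rw [hLHS f, hRHS f, hfg, hmK]
    have h1 := hbound1 (Rset n o d (!g.2))
    have h2 := hnonneg ((Rset n o d g.2).erase g)
    linarith

end auxLemmas

noncomputable def myMu : Measure (Fin 3) :=
  (3 : ENNReal) • Measure.dirac 0 + ((2 : ENNReal) • Measure.dirac 1 + (2 : ENNReal) • Measure.dirac 2)

lemma myMu_apply (S : Set (Fin 3)) :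
    myMu S = (if (0 : Fin 3) ∈ S then 3 else 0)
      + ((if (1 : Fin 3) ∈ S then 2 else 0) + (if (2 : Fin 3) ∈ S then 2 else 0)) := by
  simp [myMu, Measure.add_apply, Measure.smul_apply, Measure.dirac_apply,
    Set.indicator_apply, smul_eq_mul, mul_ite]

instance : IsFiniteMeasure myMu := by
  constructor
  rw [myMu_apply]
  simp

lemma myMu_toReal (P : Fin 3 → Prop) :
    (myMu {i | P i}).toReal = (if P 0 then 3 else 0)
      + ((if P 1 then 2 else 0) + (if P 2 then 2 else 0)) := by
  rw [myMu_apply]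
  simp only [Set.mem_setOf_eq]
  split_ifs <;> norm_num

lemma myMu_toReal_le (P : Fin 3 → Prop) : (myMu {i | P i}).toReal ≤ 7 := by
  rw [myMu_toReal]
  split_ifs <;> norm_num

lemma build (n : ℕ) [NeZero n] (hn : 3 ≤ n) (L : Finset (ZMod n × ZMod n))
    (hL : ∀ ℓ ∈ L, ℓ.1 ≠ ℓ.2) (huniq : UniquenessProperty n L) (s : Bool)
    (p0 p1 p2 : ZMod n × ZMod n) (hm0 : p0 ∈ L) (hm1 : p1 ∈ L) (hm2 : p2 ∈ L)
    (hc0 : chi n s p0 0) (hc1 : chi n s p1 0) (hc2 : chi n s p2 0)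
    (W1 : ∃ v, (chi n s p0 v ↔ chi n s p1 v) ∧ ¬(chi n s p2 v ↔ chi n s p0 v))
    (W2 : ∃ v, (chi n s p0 v ↔ chi n s p2 v) ∧ ¬(chi n s p1 v ↔ chi n s p0 v)) :
    False := by
  classical
  have hp0 : p0.1 ≠ p0.2 := hL _ hm0
  have hp1 : p1.1 ≠ p1.2 := hL _ hm1
  have hp2 : p2.1 ≠ p2.2 := hL _ hm2
  set od : Fin 3 → ZMod n × ZMod n := ![p0, p1, p2] with hod_def
  have hodmem : ∀ i, od i ∈ L := by intro i; fin_cases i <;> simpa [od]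
  have hodne : ∀ i, (od i).1 ≠ (od i).2 := fun i => hL _ (hodmem i)
  set σ : Fin 3 → Bool := ![s, !s, !s] with hσ_def
  set σ' : Fin 3 → Bool := ![!s, s, s] with hσ'_def
  have hσ0 : σ 0 = s := rfl
  have hσ1 : σ 1 = !s := rfl
  have hσ2 : σ 2 = !s := rfl
  have hσ'0 : σ' 0 = !s := rfl
  have hσ'1 : σ' 1 = s := rfl
  have hσ'2 : σ' 2 = s := rfl
  have hsns : s ≠ (!s) := fun h => Bool.not_ne_self s h.symm
  have hnss : (!s) ≠ s := Bool.not_ne_self s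
  have hflow : ∀ (τ : Fin 3 → Bool) (a : ZMod n × Bool),
      flow myMu n od τ a = (if inRoute n p0.1 p0.2 (τ 0) a then 3 else 0)
        + ((if inRoute n p1.1 p1.2 (τ 1) a then 2 else 0)
          + (if inRoute n p2.1 p2.2 (τ 2) a then 2 else 0)) := by
    intro τ a
    exact myMu_toReal (fun i => inRoute n (od i).1 (od i).2 (τ i) a)
  have hf7 : ∀ (τ : Fin 3 → Bool) (a : ZMod n × Bool), flow myMu n od τ a ≤ 7 := by
    intro τ a
    exact myMu_toReal_le (fun i => inRoute n (od i).1 (od i).2 (τ i) a)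
  -- per-player witness data
  have data0 : ∃ (g : ZMod n × Bool) (u : ℝ),
      inRoute n (od 0).1 (od 0).2 g.2 g ∧ 0 ≤ u ∧
      flow myMu n od σ g = (if σ 0 = g.2 then u else u + 1) ∧
      flow myMu n od σ' g = (if σ' 0 = g.2 then u else u + 1) := by
    · -- player 0 : witness arc (0, s)
      refine ⟨((0 : ZMod n), s), 3, (inRoute_same s p0 0).mpr hc0, by norm_num, ?_, ?_⟩
      · rw [hflow σ ((0 : ZMod n), s), hσ0, hσ1, hσ2,
          if_pos ((inRoute_same s p0 0).mpr hc0),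
          if_neg (inRoute_mismatch hsns 0), if_neg (inRoute_mismatch hsns 0),
          if_pos rfl]
        norm_num
      · rw [hflow σ' ((0 : ZMod n), s), hσ'0, hσ'1, hσ'2,
          if_neg (inRoute_mismatch hsns 0),
          if_pos ((inRoute_same s p1 0).mpr hc1),
          if_pos ((inRoute_same s p2 0).mpr hc2),
          if_neg hnss]
        norm_num
  have data1 : ∃ (g : ZMod n × Bool) (u : ℝ),
      inRoute n (od 1).1 (od 1).2 g.2 g ∧ 0 ≤ u ∧
      flow myMu n od σ g = (if σ 1 = g.2 then u else u + 1) ∧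
      flow myMu n od σ' g = (if σ' 1 = g.2 then u else u + 1) := by
    · -- player 1 : witness from W1
      obtain ⟨v, hv⟩ := W1
      by_cases hcv : chi n s p0 v
      · have hcv1 : chi n s p1 v := hv.1.mp hcv
        have hcv2 : ¬ chi n s p2 v := fun h => hv.2 ⟨fun _ => hcv, fun _ => h⟩
        refine ⟨(v, s), 2, (inRoute_same s p1 v).mpr hcv1, by norm_num, ?_, ?_⟩
        · rw [hflow σ (v, s), hσ0, hσ1, hσ2,
            if_pos ((inRoute_same s p0 v).mpr hcv),
            if_neg (inRoute_mismatch hsns v), if_neg (inRoute_mismatch hsns v),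
            if_neg hnss]
          norm_num
        · rw [hflow σ' (v, s), hσ'0, hσ'1, hσ'2,
            if_neg (inRoute_mismatch hsns v),
            if_pos ((inRoute_same s p1 v).mpr hcv1),
            if_neg (fun h => hcv2 ((inRoute_same s p2 v).mp h)),
            if_pos rfl]
          norm_num
      · have hcv1 : ¬ chi n s p1 v := fun h => hcv (hv.1.mpr h)
        have hcv2 : chi n s p2 v := by
          by_contra h
          exact hv.2 ⟨fun hh => absurd hh h, fun hh => absurd hh hcv⟩
        refine ⟨(v, !s), 2, (inRoute_opp s hp1 v).mpr hcv1, by norm_num, ?_, ?_⟩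
        · rw [hflow σ (v, !s), hσ0, hσ1, hσ2,
            if_neg (inRoute_mismatch hnss v),
            if_pos ((inRoute_opp s hp1 v).mpr hcv1),
            if_neg (fun h => ((inRoute_opp s hp2 v).mp h) hcv2),
            if_pos rfl]
          norm_num
        · rw [hflow σ' (v, !s), hσ'0, hσ'1, hσ'2,
            if_pos ((inRoute_opp s hp0 v).mpr hcv),
            if_neg (inRoute_mismatch hnss v), if_neg (inRoute_mismatch hnss v),
            if_neg hsns]
          norm_num
  have data2 : ∃ (g : ZMod n × Bool) (u : ℝ),
      inRoute n (od 2).1 (od 2).2 g.2 g ∧ 0 ≤ u ∧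
      flow myMu n od σ g = (if σ 2 = g.2 then u else u + 1) ∧
      flow myMu n od σ' g = (if σ' 2 = g.2 then u else u + 1) := by
    · -- player 2 : witness from W2
      obtain ⟨v, hv⟩ := W2
      by_cases hcv : chi n s p0 v
      · have hcv2 : chi n s p2 v := hv.1.mp hcv
        have hcv1 : ¬ chi n s p1 v := fun h => hv.2 ⟨fun _ => hcv, fun _ => h⟩
        refine ⟨(v, s), 2, (inRoute_same s p2 v).mpr hcv2, by norm_num, ?_, ?_⟩
        · rw [hflow σ (v, s), hσ0, hσ1, hσ2,
            if_pos ((inRoute_same s p0 v).mpr hcv),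
            if_neg (inRoute_mismatch hsns v), if_neg (inRoute_mismatch hsns v),
            if_neg hnss]
          norm_num
        · rw [hflow σ' (v, s), hσ'0, hσ'1, hσ'2,
            if_neg (inRoute_mismatch hsns v),
            if_neg (fun h => hcv1 ((inRoute_same s p1 v).mp h)),
            if_pos ((inRoute_same s p2 v).mpr hcv2),
            if_pos rfl]
          norm_num
      · have hcv2 : ¬ chi n s p2 v := fun h => hcv (hv.1.mpr h)
        have hcv1 : chi n s p1 v := by
          by_contra h
          exact hv.2 ⟨fun hh => absurd hh h, fun hh => absurd hh hcv⟩
        refine ⟨(v, !s), 2, (inRoute_opp s hp2 v).mpr hcv2, by norm_num, ?_, ?_⟩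
        · rw [hflow σ (v, !s), hσ0, hσ1, hσ2,
            if_neg (inRoute_mismatch hnss v),
            if_neg (fun h => ((inRoute_opp s hp1 v).mp h) hcv1),
            if_pos ((inRoute_opp s hp2 v).mpr hcv2),
            if_pos rfl]
          norm_num
        · rw [hflow σ' (v, !s), hσ'0, hσ'1, hσ'2,
            if_pos ((inRoute_opp s hp0 v).mpr hcv),
            if_neg (inRoute_mismatch hnss v), if_neg (inRoute_mismatch hnss v),
            if_neg hsns]
          norm_num
  have data : ∀ i : Fin 3, ∃ (g : ZMod n × Bool) (u : ℝ),
      inRoute n (od i).1 (od i).2 g.2 g ∧ 0 ≤ u ∧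
      flow myMu n od σ g = (if σ i = g.2 then u else u + 1) ∧
      flow myMu n od σ' g = (if σ' i = g.2 then u else u + 1) := by
    intro i
    fin_cases i
    · exact data0
    · exact data1
    · exact data2
  choose g u hg hu hFσ hFσ' using data
  set δ : ℝ := 1/(4*(n:ℝ)*Real.exp 7) with hδ_def
  set Kf : Fin 3 → ℝ := fun i =>
    (Real.exp (u i) + Real.exp (u i + 1))/(2*((Rset n (od i).1 (od i).2 (!(g i).2)).card : ℝ))
    with hKf_def
  set c : Fin 3 → (ZMod n × Bool) → ℝ → ℝ := fun i => wcost n (g i) (Kf i) δ with hc_def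
  have hδpos : 0 < δ := by
    have hn0 : (0:ℝ) < n := by exact_mod_cast Nat.pos_of_ne_zero (NeZero.ne n)
    have := Real.exp_pos (7:ℝ)
    rw [hδ_def]; positivity
  have hKpos : ∀ i, 0 ≤ Kf i := by
    intro i
    show (0:ℝ) ≤ (Real.exp (u i) + Real.exp (u i + 1))
      / (2*((Rset n (od i).1 (od i).2 (!(g i).2)).card : ℝ))
    have h1 := (Real.exp_pos (u i)).le
    have h2 := (Real.exp_pos (u i + 1)).le
    exact div_nonneg (by linarith) (mul_nonneg (by norm_num) (Nat.cast_nonneg _))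
  have hmono : ∀ i a, StrictMono (c i a) := fun i a => wcost_strictMono (g i) hδpos a
  have hcont : ∀ i a, Continuous (c i a) := fun i a => wcost_continuous (g i) (Kf i) δ a
  have hnn : ∀ i a x, 0 ≤ c i a x := fun i a x => wcost_nonneg (g i) (hKpos i) hδpos.le a x
  have hrc : ∀ (fv : ZMod n × Bool → ℝ) (i : Fin 3) (b : Bool),
      routeCost n c fv od i b = ∑ a ∈ Rset n (od i).1 (od i).2 b, c i a (fv a) :=
    fun _ _ _ => rfl
  have hequil : ∀ (τ : Fin 3 → Bool),
      (∀ i, flow myMu n od τ (g i) = (if τ i = (g i).2 then u i else u i + 1)) →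
      IsEquilibrium myMu n od c τ := by
    intro τ hτ i b
    have hks := key_sums (hodne i) (g i) (hg i) (flow myMu n od τ) (hf7 τ) (u i) (hu i)
      (Kf i) δ rfl rfl
    by_cases hb : b = τ i
    · subst hb; exact le_refl _
    · have hb' : b = !(τ i) := by
        cases b <;> cases hτi : τ i <;> simp_all
      subst hb'
      by_cases hgi : τ i = (g i).2
      · have hfv : flow myMu n od τ (g i) = u i := by rw [hτ i, if_pos hgi]
        have := hks.1 hfv
        rw [hrc, hrc, hgi]
        exact this
      · have hgi' : τ i = !(g i).2 := by
          cases hτi : τ i <;> cases hgg : (g i).2 <;> simp_all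
        have hfv : flow myMu n od τ (g i) = u i + 1 := by rw [hτ i, if_neg hgi]
        have := hks.2 hfv
        rw [hrc, hrc, hgi', Bool.not_not]
        exact this
  have hEσ : IsEquilibrium myMu n od c σ := hequil σ hFσ
  have hEσ' : IsEquilibrium myMu n od c σ' := hequil σ' hFσ'
  have hmain := huniq (Fin 3) (Fin.instMeasurableSpace 3) myMu (by infer_instance) od hodmem c
    hmono hcont hnn σ σ' (fun a => MeasurableSpace.measurableSet_top) (fun a => MeasurableSpace.measurableSet_top) hEσ hEσ' ((0 : ZMod n), s)
  have hv1 : flow myMu n od σ ((0 : ZMod n), s) = 3 := by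
    rw [hflow σ ((0 : ZMod n), s), hσ0, hσ1, hσ2,
      if_pos ((inRoute_same s p0 0).mpr hc0),
      if_neg (inRoute_mismatch hsns 0), if_neg (inRoute_mismatch hsns 0)]
    norm_num
  have hv2 : flow myMu n od σ' ((0 : ZMod n), s) = 4 := by
    rw [hflow σ' ((0 : ZMod n), s), hσ'0, hσ'1, hσ'2,
      if_neg (inRoute_mismatch hsns 0),
      if_pos ((inRoute_same s p1 0).mpr hc1),
      if_pos ((inRoute_same s p2 0).mpr hc2)]
    norm_num
  rw [hv1, hv2] at hmain
  norm_num at hmain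

lemma prop_odd1 {A B C : Prop} (h1 : ¬((B ↔ C) ∧ ¬(A ↔ B)))
    (h2 : ¬((A ↔ C) ∧ ¬(B ↔ A))) : A ↔ B := by tauto

lemma prop_odd2 {A B C : Prop} (h1 : ¬((B ↔ C) ∧ ¬(A ↔ B)))
    (h3 : ¬((A ↔ B) ∧ ¬(C ↔ A))) : A ↔ C := by tauto

lemma prop_odd3 {A B C : Prop} (h2 : ¬((A ↔ C) ∧ ¬(B ↔ A)))
    (h3 : ¬((A ↔ B) ∧ ¬(C ↔ A))) : B ↔ C := by tauto

lemma perm1 {A B C : Prop} (h : (A ↔ C) ∧ ¬(B ↔ A)) : (C ↔ A) ∧ ¬(B ↔ C) := by tauto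

lemma perm2 {A B C : Prop} (h : (B ↔ C) ∧ ¬(A ↔ B)) : (C ↔ B) ∧ ¬(A ↔ C) := by tauto

lemma perm3 {A B C : Prop} (h : (A ↔ B) ∧ ¬(C ↔ A)) : (B ↔ A) ∧ ¬(C ↔ B) := by tauto

lemma three_distinct {α : Type*} {S : Finset α} (h : 3 ≤ S.card) :
    ∃ p ∈ S, ∃ q ∈ S, ∃ r ∈ S, p ≠ q ∧ p ≠ r ∧ q ≠ r := by
  obtain ⟨p, hp⟩ := Finset.card_pos.mp (show 0 < S.card by omega)
  have h1 : 2 ≤ (S.erase p).card := by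
    rw [Finset.card_erase_of_mem hp]; omega
  obtain ⟨q, hq⟩ := Finset.card_pos.mp (show 0 < (S.erase p).card by omega)
  have h2 : 1 ≤ ((S.erase p).erase q).card := by
    rw [Finset.card_erase_of_mem hq]; omega
  obtain ⟨r, hr⟩ := Finset.card_pos.mp (show 0 < ((S.erase p).erase q).card by omega)
  obtain ⟨hrq, hrp, hrS⟩ : r ≠ q ∧ r ≠ p ∧ r ∈ S := by
    have := Finset.mem_erase.mp hr
    have := Finset.mem_erase.mp this.2
    exact ⟨(Finset.mem_erase.mp hr).1, this.1, this.2⟩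
  exact ⟨p, hp, q, (Finset.mem_erase.mp hq).2, r, hrS,
    fun h => (Finset.mem_erase.mp hq).1 h.symm, fun h => hrp h.symm, fun h => hrq h.symm⟩

/-- If the supply graph is a cycle and `(G, H)` has the uniqueness
property, then there are at most four OD-pairs. -/
theorem card_le_four_of_uniquenessProperty (n : ℕ) [NeZero n] (hn : 3 ≤ n)
    (L : Finset (ZMod n × ZMod n)) (hL : ∀ ℓ ∈ L, ℓ.1 ≠ ℓ.2)
    (huniq : UniquenessProperty n L) :
    L.card ≤ 4 := by
  by_contra hcard
  push_neg at hcard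
  have h5 : 5 ≤ L.card := by omega
  -- pigeonhole on the two arcs at edge 0
  have hsplit := Finset.card_filter_add_card_filter_not
    (s := L) (p := fun ℓ => posRoute n ℓ.1 ℓ.2 0)
  have hone : ∃ s : Bool, 3 ≤ (L.filter (fun ℓ => chi n s ℓ 0)).card := by
    rcases le_or_gt 3 ((L.filter (fun ℓ => posRoute n ℓ.1 ℓ.2 0)).card) with h | h
    · refine ⟨true, ?_⟩
      have : (L.filter (fun ℓ => chi n true ℓ 0)) = (L.filter (fun ℓ => posRoute n ℓ.1 ℓ.2 0)) := by
        apply Finset.filter_congr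
        intro x hx
        simp [chi]
      rw [this]; exact h
    · refine ⟨false, ?_⟩
      have heq : (L.filter (fun ℓ => chi n false ℓ 0))
          = (L.filter (fun ℓ => ¬ posRoute n ℓ.1 ℓ.2 0)) := by
        apply Finset.filter_congr
        intro x hx
        simp only [chi, if_neg, Bool.false_eq_true, if_false]
        exact ⟨fun h => (neg_iff_not_pos (hL x hx) 0).mp h,
          fun h => (neg_iff_not_pos (hL x hx) 0).mpr h⟩
      rw [heq]
      omega
  obtain ⟨s, hS⟩ := hone
  set S := L.filter (fun ℓ => chi n s ℓ 0) with hS_def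
  obtain ⟨p, hpS, q, hqS, r, hrS, hpq, hpr, hqr⟩ := three_distinct hS
  have hpL : p ∈ L := (Finset.mem_filter.mp hpS).1
  have hqL : q ∈ L := (Finset.mem_filter.mp hqS).1
  have hrL : r ∈ L := (Finset.mem_filter.mp hrS).1
  have hcp : chi n s p 0 := (Finset.mem_filter.mp hpS).2
  have hcq : chi n s q 0 := (Finset.mem_filter.mp hqS).2
  have hcr : chi n s r 0 := (Finset.mem_filter.mp hrS).2
  have hDpq : ∃ v, ¬ (chi n s p v ↔ chi n s q v) :=
    exists_chi_ne hn s (hL _ hpL) (hL _ hqL) hpq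
  have hDpr : ∃ v, ¬ (chi n s p v ↔ chi n s r v) :=
    exists_chi_ne hn s (hL _ hpL) (hL _ hrL) hpr
  have hDqr : ∃ v, ¬ (chi n s q v ↔ chi n s r v) :=
    exists_chi_ne hn s (hL _ hqL) (hL _ hrL) hqr
  have Tp_def : True := trivial
  by_cases hTq : ∃ v, (chi n s p v ↔ chi n s r v) ∧ ¬(chi n s q v ↔ chi n s p v)
  · by_cases hTr : ∃ v, (chi n s p v ↔ chi n s q v) ∧ ¬(chi n s r v ↔ chi n s p v)
    · -- roles (p; q, r)
      exact build n hn L hL huniq s p q r hpL hqL hrL hcp hcq hcr hTr hTq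
    · by_cases hTp : ∃ v, (chi n s q v ↔ chi n s r v) ∧ ¬(chi n s p v ↔ chi n s q v)
      · -- roles (r; p, q)
        refine build n hn L hL huniq s r p q hrL hpL hqL hcr hcp hcq ?_ ?_
        · obtain ⟨v, hv⟩ := hTq; exact ⟨v, perm1 hv⟩
        · obtain ⟨v, hv⟩ := hTp; exact ⟨v, perm2 hv⟩
      ·
        obtain ⟨v, hv⟩ := hDpr
        exact hv (prop_odd2 (fun hh => hTp ⟨v, hh⟩) (fun hh => hTr ⟨v, hh⟩))
  · by_cases hTr : ∃ v, (chi n s p v ↔ chi n s q v) ∧ ¬(chi n s r v ↔ chi n s p v)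
    · by_cases hTp : ∃ v, (chi n s q v ↔ chi n s r v) ∧ ¬(chi n s p v ↔ chi n s q v)
      · -- roles (q; p, r)
        refine build n hn L hL huniq s q p r hqL hpL hrL hcq hcp hcr ?_ hTp
        obtain ⟨v, hv⟩ := hTr; exact ⟨v, perm3 hv⟩
      · -- ¬Tp ∧ ¬Tq
        obtain ⟨v, hv⟩ := hDpq
        exact hv (prop_odd1 (fun hh => hTp ⟨v, hh⟩) (fun hh => hTq ⟨v, hh⟩))
    · -- ¬Tq ∧ ¬Tr
      obtain ⟨v, hv⟩ := hDqr
      exact hv (prop_odd3 (fun hh => hTq ⟨v, hh⟩) (fun hh => hTr ⟨v, hh⟩))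
end

section
/- Let G be a cycle and L a set of four OD-pairs such that every arc of the directed version of G is contained in at most two routes. Then every arc of G is contained in exactly two routes, and in the demand digraph H every vertex has indegree (as endpoint of OD-pairs) equal to its outdegree restricted appropriately; in particular H contains a directed circuit. -/
open scoped Classical
open MeasureTheory

section helpers
variable {n : ℕ} [NeZero n]

lemma sub_val_of_lt {a b : ZMod n} (h : a.val < b.val) :
    (a - b).val = a.val + (n - b.val) := by
  have hb : b ≠ 0 := by rintro rfl; simp at h
  have : NeZero b := ⟨hb⟩
  have hbn : b.val < n := ZMod.val_lt b
  have han : a.val < n := ZMod.val_lt a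
  rw [sub_eq_add_neg, ZMod.val_add, ZMod.val_neg_of_ne_zero]
  exact Nat.mod_eq_of_lt (by omega)

lemma pos_iff_not_neg {o d v : ZMod n} (h : o ≠ d) :
    posRoute n o d v ↔ ¬ negRoute n o d v := by
  have e1 : v - d = (v - o) - (d - o) := by ring
  have e2 : o - d = -(d - o) := by ring
  unfold posRoute negRoute
  rw [e1, e2]
  set a := v - o with ha
  set c := d - o with hc
  have hcne : c ≠ 0 := sub_ne_zero.mpr (Ne.symm h)
  have : NeZero c := ⟨hcne⟩
  have hcv : c.val < n := ZMod.val_lt c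
  have hav : a.val < n := ZMod.val_lt a
  have hc0 : c.val ≠ 0 := by simpa [ZMod.val_eq_zero] using hcne
  rw [ZMod.val_neg_of_ne_zero]
  rcases lt_or_ge a.val c.val with hlt | hge
  · rw [sub_val_of_lt hlt]; omega
  · rw [ZMod.val_sub hge]; omega

lemma negone_val (hn3 : 3 ≤ n) : ((-1 : ZMod n)).val = n - 1 := by
  have h1 : (1 : ZMod n).val = 1 := by
    have : Fact (1 < n) := ⟨by omega⟩
    exact ZMod.val_one n
  have : NeZero (1 : ZMod n) := ⟨fun hh => by
    rw [hh, ZMod.val_zero] at h1; exact one_ne_zero h1.symm⟩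
  rw [ZMod.val_neg_of_ne_zero, h1]

lemma pos_step (hn3 : 3 ≤ n) {o d v : ZMod n} (h : o ≠ d) :
    (posRoute n o d v ∨ d = v) ↔ (posRoute n o d (v - 1) ∨ o = v) := by
  have e : v - 1 - o = (v - o) - 1 := by ring
  unfold posRoute
  rw [e]
  have hdv : (d = v) ↔ (d - o).val = (v - o).val := by
    constructor
    · rintro rfl; rfl
    · intro hv; have := ZMod.val_injective n hv; exact sub_left_injective this
  have hov : (o = v) ↔ (v - o).val = 0 := by
    rw [ZMod.val_eq_zero, sub_eq_zero, eq_comm]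
  rw [hdv, hov]
  set a := v - o with ha
  set c := d - o with hc
  have hcne : c ≠ 0 := sub_ne_zero.mpr (Ne.symm h)
  have hc0 : c.val ≠ 0 := by simpa [ZMod.val_eq_zero] using hcne
  have hcv : c.val < n := ZMod.val_lt c
  have hav : a.val < n := ZMod.val_lt a
  have h1 : (1 : ZMod n).val = 1 := by
    have : Fact (1 < n) := ⟨by omega⟩
    exact ZMod.val_one n
  by_cases haz : a = 0
  · have haz0 : a.val = 0 := by rwa [ZMod.val_eq_zero]
    have h01 : (a - 1).val = n - 1 := by rw [haz, zero_sub, negone_val hn3]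
    rw [h01]
    omega
  · have hav0 : a.val ≠ 0 := by simpa [ZMod.val_eq_zero] using haz
    have : (a - 1).val = a.val - 1 := by rw [ZMod.val_sub (by omega), h1]
    rw [this]
    omega

end helpers

/-- If `|L| = 4` and each arc of the cycle is contained in at most
two routes, then every arc is contained in exactly two routes, every vertex of the
demand digraph has indegree equal to outdegree, and in particular the demand digraph
contains a directed circuit (a cyclic sequence of distinct OD-pairs in which the head
of each pair is the tail of the next). -/
theorem four_pairs_structure (n : ℕ) (hn : 3 ≤ n)
    (L : Finset (ZMod n × ZMod n)) (hL : ∀ ℓ ∈ L, ℓ.1 ≠ ℓ.2)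
    (hcard : L.card = 4)
    (h2 : ∀ a : ZMod n × Bool, (L.filter (fun ℓ => inRoute n ℓ.1 ℓ.2 a.2 a)).card ≤ 2) :
    (∀ a : ZMod n × Bool, (L.filter (fun ℓ => inRoute n ℓ.1 ℓ.2 a.2 a)).card = 2) ∧
    (∀ v : ZMod n,
      (L.filter (fun ℓ => ℓ.2 = v)).card = (L.filter (fun ℓ => ℓ.1 = v)).card) ∧
    ∃ (m : ℕ), 2 ≤ m ∧ ∃ f : ZMod m → ZMod n × ZMod n,
      Function.Injective f ∧ (∀ k, f k ∈ L) ∧ ∀ k, (f k).2 = (f (k + 1)).1 := by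
  have hNZ : NeZero n := ⟨by omega⟩
  have ep : ∀ v : ZMod n, L.filter (fun ℓ => inRoute n ℓ.1 ℓ.2 (v, true).2 (v, true))
      = L.filter (fun ℓ => posRoute n ℓ.1 ℓ.2 v) := by
    intro v; apply Finset.filter_congr; intro ℓ _; simp [inRoute]
  have en : ∀ v : ZMod n, L.filter (fun ℓ => inRoute n ℓ.1 ℓ.2 (v, false).2 (v, false))
      = L.filter (fun ℓ => negRoute n ℓ.1 ℓ.2 v) := by
    intro v; apply Finset.filter_congr; intro ℓ _; simp [inRoute]
  have key : ∀ v : ZMod n,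
      (L.filter (fun ℓ => posRoute n ℓ.1 ℓ.2 v)).card = 2 ∧
      (L.filter (fun ℓ => negRoute n ℓ.1 ℓ.2 v)).card = 2 := by
    intro v
    have hneg : L.filter (fun ℓ => negRoute n ℓ.1 ℓ.2 v)
        = L.filter (fun ℓ => ¬ posRoute n ℓ.1 ℓ.2 v) := by
      apply Finset.filter_congr
      intro ℓ hl
      rw [pos_iff_not_neg (hL ℓ hl), not_not]
    have hsum : (L.filter (fun ℓ => posRoute n ℓ.1 ℓ.2 v)).card
        + (L.filter (fun ℓ => negRoute n ℓ.1 ℓ.2 v)).card = 4 := by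
      rw [hneg, Finset.card_filter_add_card_filter_not, hcard]
    have hp := h2 (v, true)
    have hq := h2 (v, false)
    rw [ep v] at hp
    rw [en v] at hq
    omega
  have part1 : ∀ a : ZMod n × Bool,
      (L.filter (fun ℓ => inRoute n ℓ.1 ℓ.2 a.2 a)).card = 2 := by
    rintro ⟨v, b⟩
    cases b
    · rw [en v]; exact (key v).2
    · rw [ep v]; exact (key v).1
  have part2 : ∀ v : ZMod n,
      (L.filter (fun ℓ => ℓ.2 = v)).card = (L.filter (fun ℓ => ℓ.1 = v)).card := by
    intro v
    have hA : L.filter (fun ℓ => posRoute n ℓ.1 ℓ.2 v ∨ ℓ.2 = v)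
        = L.filter (fun ℓ => posRoute n ℓ.1 ℓ.2 (v - 1) ∨ ℓ.1 = v) := by
      apply Finset.filter_congr
      intro ℓ hl
      exact pos_step hn (hL ℓ hl)
    have d1 : Disjoint (L.filter (fun ℓ => posRoute n ℓ.1 ℓ.2 v))
        (L.filter (fun ℓ => ℓ.2 = v)) := by
      rw [Finset.disjoint_left]
      intro ℓ ha hb
      simp only [Finset.mem_filter] at ha hb
      have h := ha.2
      unfold posRoute at h
      rw [hb.2] at h
      exact lt_irrefl _ h
    have d2 : Disjoint (L.filter (fun ℓ => posRoute n ℓ.1 ℓ.2 (v - 1)))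
        (L.filter (fun ℓ => ℓ.1 = v)) := by
      rw [Finset.disjoint_left]
      intro ℓ ha hb
      simp only [Finset.mem_filter] at ha hb
      have h := ha.2
      unfold posRoute at h
      rw [hb.2] at h
      have e : v - 1 - v = -1 := by ring
      rw [e, negone_val hn] at h
      have := ZMod.val_lt (ℓ.2 - v)
      omega
    have c1 : (L.filter (fun ℓ => posRoute n ℓ.1 ℓ.2 v ∨ ℓ.2 = v)).card
        = (L.filter (fun ℓ => posRoute n ℓ.1 ℓ.2 v)).card
          + (L.filter (fun ℓ => ℓ.2 = v)).card := by
      rw [Finset.filter_or, Finset.card_union_of_disjoint d1]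
    have c2 : (L.filter (fun ℓ => posRoute n ℓ.1 ℓ.2 (v - 1) ∨ ℓ.1 = v)).card
        = (L.filter (fun ℓ => posRoute n ℓ.1 ℓ.2 (v - 1))).card
          + (L.filter (fun ℓ => ℓ.1 = v)).card := by
      rw [Finset.filter_or, Finset.card_union_of_disjoint d2]
    have k1 := (key v).1
    have k2 := (key (v - 1)).1
    rw [hA, c2] at c1
    omega
  refine ⟨part1, part2, ?_⟩
  -- Part 3: directed circuit
  have hstep : ∀ ℓ ∈ L, ∃ ℓ' ∈ L, ℓ'.1 = ℓ.2 := by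
    intro ℓ hℓ
    have h := part2 ℓ.2
    have hne : (L.filter (fun ℓ' => ℓ'.2 = ℓ.2)).Nonempty := ⟨ℓ, by simp [hℓ]⟩
    have : (L.filter (fun ℓ' => ℓ'.1 = ℓ.2)).Nonempty := by
      rw [← Finset.card_pos, ← h, Finset.card_pos]
      exact hne
    obtain ⟨ℓ', hℓ'⟩ := this
    simp only [Finset.mem_filter] at hℓ'
    exact ⟨ℓ', hℓ'.1, hℓ'.2⟩
  have hLne : L.Nonempty := by rw [← Finset.card_pos, hcard]; omega
  obtain ⟨x0v, hx0⟩ := hLne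
  let α := {x : ZMod n × ZMod n // x ∈ L}
  have g : ∀ x : α, {y : α // y.1.1 = x.1.2} := fun x =>
    ⟨⟨(hstep x.1 x.2).choose, (hstep x.1 x.2).choose_spec.1⟩,
      (hstep x.1 x.2).choose_spec.2⟩
  set G : α → α := fun x => (g x).1 with hGdef
  have hG : ∀ x : α, (G x).1.1 = x.1.2 := fun x => (g x).2
  have hGne : ∀ x : α, G x ≠ x := by
    intro x he
    have := hG x
    rw [he] at this
    exact hL x.1 x.2 this
  -- find a periodic point of G
  have : ∃ i j : ℕ, i < j ∧ G^[i] ⟨x0v, hx0⟩ = G^[j] ⟨x0v, hx0⟩ := by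
    have : Finite α := by infer_instance
    obtain ⟨i, j, hij, he⟩ :=
      Finite.exists_ne_map_eq_of_infinite (fun k : ℕ => G^[k] (⟨x0v, hx0⟩ : α))
    rcases lt_or_gt_of_ne hij with h | h
    · exact ⟨i, j, h, he⟩
    · exact ⟨j, i, h, he.symm⟩
  obtain ⟨i, j, hij, he⟩ := this
  set y : α := G^[i] ⟨x0v, hx0⟩ with hy
  have hper : Function.IsPeriodicPt G (j - i) y := by
    show G^[j - i] y = y
    rw [hy, ← Function.iterate_add_apply]
    rw [show j - i + i = j by omega]
    exact he.symm
  have hmem : y ∈ Function.periodicPts G :=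
    Function.mk_mem_periodicPts (by omega) hper
  set m := Function.minimalPeriod G y with hm
  have hm1 : 1 ≤ m := Function.minimalPeriod_pos_of_mem_periodicPts hmem
  have hm2 : 2 ≤ m := by
    rcases Nat.lt_or_ge m 2 with h | h
    · exfalso
      have hmp : Function.IsPeriodicPt G m y := Function.isPeriodicPt_minimalPeriod G y
      have : m = 1 := by omega
      rw [this] at hmp
      exact hGne y hmp
    · exact h
  have hmNZ : NeZero m := ⟨by omega⟩
  refine ⟨m, hm2, fun k => (G^[(k : ZMod m).val] y).1, ?_, fun k => (G^[(k : ZMod m).val] y).2, ?_⟩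
  · intro k k' hkk
    have : G^[(k : ZMod m).val] y = G^[(k' : ZMod m).val] y := Subtype.ext hkk
    have hvv : (k : ZMod m).val = (k' : ZMod m).val :=
      Function.iterate_injOn_Iio_minimalPeriod
        (Set.mem_Iio.mpr (ZMod.val_lt k)) (Set.mem_Iio.mpr (ZMod.val_lt k')) this
    exact ZMod.val_injective m hvv
  · intro k
    have hval : (k + 1 : ZMod m).val = (k.val + 1) % m := by
      rw [ZMod.val_add, ZMod.val_one_eq_one_mod]
      have : (1 : ℕ) % m = 1 := Nat.mod_eq_of_lt (by omega)
      rw [this]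
    show ((G^[k.val] y : α) : ZMod n × ZMod n).2 = ((G^[(k + 1).val] y : α) : ZMod n × ZMod n).1
    rw [hval]
    have : G^[(k.val + 1) % m] y = G^[k.val + 1] y :=
      Function.iterate_mod_minimalPeriod_eq
    rw [this, Function.iterate_succ_apply']
    exact (hG _).symm
end
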